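/- Let H be a real Hilbert space with Hilbert basis (e_i)_{i∈I}, let S and A be bounded linear operators on H, let q ≥ 1 be an integer, and suppose the range of A has dimension at most q. Then q · a_{2q}(S)² ≤ ∑_{i∈I} ‖(S − A∘S)(e_i)‖² (an inequality in [0,∞]). -/

import Mathlib

open scoped ENNReal
open scoped RealInnerProductSpace

set_option linter.unusedSectionVars false

section Aux
variable {I H : Type*} [NormedAddCommGroup H] [InnerProductSpace ℝ H] [CompleteSpace H]

lemma lemA (b : HilbertBasis I ℝ H) (x : H) :
    (‖x‖₊ : ℝ≥0∞) ^ 2 = ∑' i, ENNReal.ofReal (⟪b i, x⟫ ^ 2) := by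
  have hs : HasSum (fun i => ⟪x, b i⟫ * ⟪b i, x⟫) ⟪x, x⟫ := b.hasSum_inner_mul_inner x x
  have hcong : (fun i => ⟪x, b i⟫ * ⟪b i, x⟫) = fun i => ⟪b i, x⟫ ^ 2 := by
    funext i; rw [real_inner_comm x (b i), sq]
  rw [hcong] at hs
  have h1 : ‖x‖ ^ 2 = ∑' i, ⟪b i, x⟫ ^ 2 := by
    rw [hs.tsum_eq, real_inner_self_eq_norm_sq]
  have h2 : ENNReal.ofReal (‖x‖ ^ 2) = ∑' i, ENNReal.ofReal (⟪b i, x⟫ ^ 2) := by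
    rw [h1]
    exact ENNReal.ofReal_tsum_of_nonneg (fun i => sq_nonneg _) hs.summable
  rw [← h2, ← enorm_eq_nnnorm, ← ofReal_norm, ← ENNReal.ofReal_pow (norm_nonneg _)]

end Aux

section Aux2
variable {I H : Type*} [NormedAddCommGroup H] [InnerProductSpace ℝ H] [CompleteSpace H]

lemma lemB (b : HilbertBasis I ℝ H) (T : H →L[ℝ] H) :
    ∑' i, (‖ContinuousLinearMap.adjoint T (b i)‖₊ : ℝ≥0∞) ^ 2
      = ∑' i, (‖T (b i)‖₊ : ℝ≥0∞) ^ 2 := by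
  calc ∑' i, (‖ContinuousLinearMap.adjoint T (b i)‖₊ : ℝ≥0∞) ^ 2
      = ∑' i, ∑' k, ENNReal.ofReal (⟪b i, T (b k)⟫ ^ 2) := by
        refine tsum_congr fun i => ?_
        rw [lemA b]
        refine tsum_congr fun k => ?_
        congr 1
        rw [real_inner_comm, ContinuousLinearMap.adjoint_inner_left]
    _ = ∑' k, ∑' i, ENNReal.ofReal (⟪b i, T (b k)⟫ ^ 2) := ENNReal.tsum_comm
    _ = ∑' i, (‖T (b i)‖₊ : ℝ≥0∞) ^ 2 := by
        refine tsum_congr fun k => (lemA b _).symm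

lemma lemD (b : HilbertBasis I ℝ H) (T : H →L[ℝ] H) {n : ℕ} (x : Fin n → H)
    (hx : Orthonormal ℝ x) :
    ∑ j : Fin n, (‖T (x j)‖₊ : ℝ≥0∞) ^ 2 ≤ ∑' i, (‖T (b i)‖₊ : ℝ≥0∞) ^ 2 := by
  calc ∑ j : Fin n, (‖T (x j)‖₊ : ℝ≥0∞) ^ 2
      = ∑ j : Fin n, ∑' i, ENNReal.ofReal (⟪b i, T (x j)⟫ ^ 2) := by
        exact Finset.sum_congr rfl fun j _ => lemA b _
    _ = ∑' i, ∑ j : Fin n, ENNReal.ofReal (⟪b i, T (x j)⟫ ^ 2) := by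
        rw [← tsum_fintype (L := SummationFilter.unconditional _), ENNReal.tsum_comm]
        exact tsum_congr fun i => tsum_fintype _
    _ ≤ ∑' i, (‖ContinuousLinearMap.adjoint T (b i)‖₊ : ℝ≥0∞) ^ 2 := by
        refine ENNReal.tsum_le_tsum fun i => ?_
        have h1 : ∀ j : Fin n, ⟪b i, T (x j)⟫ = ⟪x j, ContinuousLinearMap.adjoint T (b i)⟫ := by
          intro j
          rw [← ContinuousLinearMap.adjoint_inner_left, real_inner_comm]
        have h2 : ∑ j : Fin n, ⟪x j, ContinuousLinearMap.adjoint T (b i)⟫ ^ 2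
            ≤ ‖ContinuousLinearMap.adjoint T (b i)‖ ^ 2 := by
          have := hx.sum_inner_products_le (s := Finset.univ) (ContinuousLinearMap.adjoint T (b i))
          simpa [Real.norm_eq_abs, sq_abs] using this
        calc ∑ j : Fin n, ENNReal.ofReal (⟪b i, T (x j)⟫ ^ 2)
            = ENNReal.ofReal (∑ j : Fin n, ⟪x j, ContinuousLinearMap.adjoint T (b i)⟫ ^ 2) := by
              rw [ENNReal.ofReal_sum_of_nonneg (fun j _ => sq_nonneg _)]
              exact Finset.sum_congr rfl fun j _ => by rw [h1 j]
          _ ≤ ENNReal.ofReal (‖ContinuousLinearMap.adjoint T (b i)‖ ^ 2) := ENNReal.ofReal_le_ofReal h2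
          _ = (‖ContinuousLinearMap.adjoint T (b i)‖₊ : ℝ≥0∞) ^ 2 := by
              rw [← enorm_eq_nnnorm, ← ofReal_norm, ← ENNReal.ofReal_pow (norm_nonneg _)]
    _ = ∑' i, (‖T (b i)‖₊ : ℝ≥0∞) ^ 2 := lemB b T

end Aux2

section Aux3
variable {H : Type*} [NormedAddCommGroup H] [InnerProductSpace ℝ H] [CompleteSpace H]

lemma lemE (T : H →L[ℝ] H) (c : ℝ) (q : ℕ)
    (h : ∀ V : Submodule ℝ H, Module.rank ℝ V ≤ ((q - 1 : ℕ) : Cardinal) →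
      ∃ y, y ∈ Vᗮ ∧ c * ‖y‖ < ‖T y‖) :
    ∃ x : Fin q → H, Orthonormal ℝ x ∧ ∀ j, c < ‖T (x j)‖ := by
  have key : ∀ n : ℕ, n ≤ q → ∃ x : Fin n → H, Orthonormal ℝ x ∧ ∀ j, c < ‖T (x j)‖ := by
    intro n
    induction n with
    | zero =>
        intro _
        refine ⟨fun j => j.elim0, ?_, fun j => j.elim0⟩
        rw [orthonormal_iff_ite]
        exact fun i => i.elim0
    | succ n ih =>
        intro hn
        obtain ⟨x, hx, hxT⟩ := ih (le_trans (Nat.le_succ n) hn)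
        set V := Submodule.span ℝ (Set.range x) with hV
        have hrank : Module.rank ℝ V ≤ ((q - 1 : ℕ) : Cardinal) := by
          refine le_trans (rank_span_le _) ?_
          have h1 := Cardinal.mk_range_le_lift (f := x)
          rw [Cardinal.mk_fin, Cardinal.lift_natCast, Cardinal.lift_le_nat_iff] at h1
          exact le_trans h1 (Nat.cast_le.mpr (show n ≤ q - 1 by omega))
        obtain ⟨y, hyV, hyT⟩ := h V hrank
        have hy0 : y ≠ 0 := by
          rintro rfl
          simp at hyT
        have hny : (0 : ℝ) < ‖y‖ := norm_pos_iff.mpr hy0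
        set u := ‖y‖⁻¹ • y with hu
        have hnu : ‖u‖ = 1 := by
          rw [hu, norm_smul, norm_inv, norm_norm, inv_mul_cancel₀ (ne_of_gt hny)]
        have huV : u ∈ Vᗮ := Submodule.smul_mem _ _ hyV
        have hTu : c < ‖T u‖ := by
          have : ‖T u‖ = ‖y‖⁻¹ * ‖T y‖ := by
            rw [hu, map_smul, norm_smul, norm_inv, norm_norm]
          rw [this]
          calc c = (c * ‖y‖) * ‖y‖⁻¹ := by field_simp
            _ < ‖T y‖ * ‖y‖⁻¹ := mul_lt_mul_of_pos_right hyT (inv_pos.mpr hny)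
            _ = ‖y‖⁻¹ * ‖T y‖ := mul_comm _ _
        refine ⟨Fin.snoc x u, ?_, ?_⟩
        · rw [orthonormal_iff_ite]
          intro i j
          refine Fin.lastCases ?_ (fun i' => ?_) i <;> [skip; skip] <;>
            refine Fin.lastCases ?_ (fun j' => ?_) j
          · simp [Fin.snoc_last, real_inner_self_eq_norm_sq, hnu]
          · rw [Fin.snoc_last, Fin.snoc_castSucc]
            have : x j' ∈ V := Submodule.subset_span ⟨j', rfl⟩
            have h0 : ⟪x j', u⟫ = 0 := (Submodule.mem_orthogonal V u).mp huV _ this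
            rw [real_inner_comm] at h0
            simp only [h0]
            have : Fin.last n ≠ Fin.castSucc j' := by
              simp [Fin.ext_iff]; omega
            simp [this]
          · rw [Fin.snoc_last, Fin.snoc_castSucc]
            have : x i' ∈ V := Submodule.subset_span ⟨i', rfl⟩
            have h0 : ⟪x i', u⟫ = 0 := (Submodule.mem_orthogonal V u).mp huV _ this
            simp only [h0]
            have : Fin.castSucc i' ≠ Fin.last n := by
              simp [Fin.ext_iff]; omega
            simp [this]
          · rw [Fin.snoc_castSucc, Fin.snoc_castSucc]
            have := orthonormal_iff_ite.mp hx i' j'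
            rw [this]
            by_cases hij : i' = j'
            · simp [hij]
            · have : (i' : ℕ) ≠ (j' : ℕ) := fun hc => hij (Fin.ext hc)
              simp [hij, Fin.ext_iff, this]
        · intro j
          refine Fin.lastCases ?_ (fun j' => ?_) j
          · rw [Fin.snoc_last]; exact hTu
          · rw [Fin.snoc_castSucc]; exact hxT j'
  exact key q le_rfl

end Aux3

/-- The `j`-th approximation number of a bounded linear operator `T` on a real Hilbert
space: `a_j(T) = inf{‖T - F‖ : F bounded linear, dim(range F) < j}`. -/
noncomputable def approxNumber {H : Type*} [NormedAddCommGroup H]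
    [InnerProductSpace ℝ H] (T : H →L[ℝ] H) (j : ℕ) : ℝ :=
  sInf {x : ℝ | ∃ F : H →L[ℝ] H,
    Module.rank ℝ (LinearMap.range (F : H →ₗ[ℝ] H)) < (j : Cardinal) ∧ x = ‖T - F‖}

/-- If `(e_i)_{i∈I}` is a Hilbert basis of `H`, `S, A` are bounded operators on
`H`, `q ≥ 1`, and the range of `A` has dimension at most `q`, then
`q · a_{2q}(S)² ≤ ∑_i ‖(S - A∘S)(e_i)‖²` (an inequality in `[0,∞]`). -/
theorem statement4 {I : Type*} {H : Type*} [NormedAddCommGroup H]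
    [InnerProductSpace ℝ H] [CompleteSpace H] (b : HilbertBasis I ℝ H)
    (S A : H →L[ℝ] H) (q : ℕ) (hq : 1 ≤ q)
    (hA : Module.rank ℝ (LinearMap.range (A : H →ₗ[ℝ] H)) ≤ (q : Cardinal)) :
    (q : ℝ≥0∞) * ENNReal.ofReal (approxNumber S (2 * q) ^ 2) ≤
      ∑' i, (‖(S - A ∘L S) (b i)‖₊ : ℝ≥0∞) ^ 2 := by
  set T : H →L[ℝ] H := S - A ∘L S with hT
  set Sig : ℝ≥0∞ := ∑' i, (‖T (b i)‖₊ : ℝ≥0∞) ^ 2 with hSig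
  set c : ℝ := approxNumber S (2 * q) with hc
  set Sset : Set ℝ := {x : ℝ | ∃ F : H →L[ℝ] H,
    Module.rank ℝ (LinearMap.range (F : H →ₗ[ℝ] H)) < ((2 * q : ℕ) : Cardinal) ∧ x = ‖S - F‖} with hSset
  have hne : Sset.Nonempty := by
    refine ⟨‖S - 0‖, 0, ?_, rfl⟩
    have : LinearMap.range ((0 : H →L[ℝ] H) : H →ₗ[ℝ] H) = ⊥ := LinearMap.range_zero
    rw [this]
    simp only [rank_bot]
    exact_mod_cast Nat.pos_of_ne_zero (by omega)
  have hbdd : BddBelow Sset := by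
    refine ⟨0, fun x hx => ?_⟩
    obtain ⟨F, _, rfl⟩ := hx
    exact norm_nonneg _
  have hc0 : 0 ≤ c := le_csInf hne (by rintro x ⟨F, _, rfl⟩; exact norm_nonneg _)
  by_contra hcon
  push_neg at hcon
  -- Sig < q * ofReal (c^2), hence finite and c > 0
  have hfin : Sig < ⊤ := lt_of_lt_of_le hcon le_top
  have hS0 : Sig ≠ ⊤ := ne_of_lt hfin
  set SR : ℝ := Sig.toReal with hSR
  have hSR0 : 0 ≤ SR := ENNReal.toReal_nonneg
  have hofr : Sig = ENNReal.ofReal SR := (ENNReal.ofReal_toReal hS0).symm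
  have hlt : SR < (q : ℝ) * c ^ 2 := by
    have h1 : Sig < ENNReal.ofReal ((q : ℝ) * c ^ 2) := by
      rw [ENNReal.ofReal_mul (by positivity), ENNReal.ofReal_natCast]
      exact hcon
    rw [hofr] at h1
    have h2 : 0 < (q : ℝ) * c ^ 2 := by
      by_contra h2
      push_neg at h2
      rw [ENNReal.ofReal_eq_zero.mpr h2] at h1
      exact ENNReal.not_lt_zero h1
    exact (ENNReal.ofReal_lt_ofReal_iff h2).mp h1
  have hqR : (0 : ℝ) < q := by exact_mod_cast hq
  set m : ℝ := (SR / q + c ^ 2) / 2 with hm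
  have hdiv : SR / q < c ^ 2 := by
    rw [div_lt_iff₀ hqR]; linarith
  have hm1 : SR / q < m := by rw [hm]; linarith
  have hm2 : m < c ^ 2 := by rw [hm]; linarith
  have hm0 : 0 ≤ m := le_trans (by positivity) (le_of_lt hm1)
  set c' : ℝ := Real.sqrt m with hc'
  have hc'0 : 0 ≤ c' := Real.sqrt_nonneg m
  have hc'sq : c' ^ 2 = m := Real.sq_sqrt hm0
  have hc'c : c' < c := by
    have := Real.sqrt_lt_sqrt hm0 hm2
    rwa [Real.sqrt_sq hc0] at this
  have hSc' : SR < (q : ℝ) * c' ^ 2 := by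
    rw [hc'sq]
    calc SR = q * (SR / q) := by field_simp
      _ < q * m := by exact mul_lt_mul_of_pos_left hm1 hqR
  -- dichotomy
  by_cases hcase : ∀ V : Submodule ℝ H, Module.rank ℝ V ≤ ((q - 1 : ℕ) : Cardinal) →
      ∃ y, y ∈ Vᗮ ∧ c' * ‖y‖ < ‖T y‖
  · -- greedy gives orthonormal family contradicting the HS bound
    obtain ⟨x, hx, hxT⟩ := lemE T c' q hcase
    have hsum : (q : ℝ≥0∞) * ENNReal.ofReal (c' ^ 2) ≤ Sig := by
      have h1 : ∀ j : Fin q, ENNReal.ofReal (c' ^ 2) ≤ (‖T (x j)‖₊ : ℝ≥0∞) ^ 2 := by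
        intro j
        rw [← enorm_eq_nnnorm, ← ofReal_norm, ← ENNReal.ofReal_pow (norm_nonneg _)]
        exact ENNReal.ofReal_le_ofReal
          (pow_le_pow_left₀ hc'0 (le_of_lt (hxT j)) 2)
      calc (q : ℝ≥0∞) * ENNReal.ofReal (c' ^ 2)
          = ∑ _j : Fin q, ENNReal.ofReal (c' ^ 2) := by
            rw [Finset.sum_const, Finset.card_univ, Fintype.card_fin, nsmul_eq_mul]
        _ ≤ ∑ j : Fin q, (‖T (x j)‖₊ : ℝ≥0∞) ^ 2 := Finset.sum_le_sum fun j _ => h1 j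
        _ ≤ Sig := lemD b T x hx
    have hlt2 : Sig < (q : ℝ≥0∞) * ENNReal.ofReal (c' ^ 2) := by
      rw [hofr, ← ENNReal.ofReal_natCast, ← ENNReal.ofReal_mul (by positivity)]
      exact (ENNReal.ofReal_lt_ofReal_iff (lt_of_le_of_lt hSR0 hSc')).mpr hSc'
    exact absurd hsum (not_le.mpr hlt2)
  · -- there is a good subspace: build a finite-rank approximation of S
    push_neg at hcase
    obtain ⟨V, hVrank, hVgood⟩ := hcase
    have hVfin : FiniteDimensional ℝ V := IsNoetherian.iff_fg.1 <|
      IsNoetherian.iff_rank_lt_aleph0.2 (lt_of_le_of_lt hVrank (Cardinal.nat_lt_aleph0 _))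
    set P : H →L[ℝ] H := V.subtypeL ∘L V.orthogonalProjectionOnto with hP
    set F : H →L[ℝ] H := A ∘L S + T ∘L P with hF
    have hrankF : Module.rank ℝ (LinearMap.range (F : H →ₗ[ℝ] H)) < ((2 * q : ℕ) : Cardinal) := by
      have h1 : LinearMap.rank (F : H →ₗ[ℝ] H) ≤
          LinearMap.rank ((A ∘L S : H →L[ℝ] H) : H →ₗ[ℝ] H)
            + LinearMap.rank ((T ∘L P : H →L[ℝ] H) : H →ₗ[ℝ] H) := by
        have : (F : H →ₗ[ℝ] H) = ((A ∘L S : H →L[ℝ] H) : H →ₗ[ℝ] H)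
            + ((T ∘L P : H →L[ℝ] H) : H →ₗ[ℝ] H) := rfl
        rw [this]
        exact LinearMap.rank_add_le _ _
      have h2 : LinearMap.rank ((A ∘L S : H →L[ℝ] H) : H →ₗ[ℝ] H) ≤ (q : Cardinal) := by
        have : ((A ∘L S : H →L[ℝ] H) : H →ₗ[ℝ] H)
            = (A : H →ₗ[ℝ] H).comp (S : H →ₗ[ℝ] H) := rfl
        rw [this]
        exact le_trans (LinearMap.rank_comp_le_left _ _) hA
      have h3 : LinearMap.rank ((T ∘L P : H →L[ℝ] H) : H →ₗ[ℝ] H)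
          ≤ ((q - 1 : ℕ) : Cardinal) := by
        have he : ((T ∘L P : H →L[ℝ] H) : H →ₗ[ℝ] H)
            = (T : H →ₗ[ℝ] H).comp (P : H →ₗ[ℝ] H) := rfl
        rw [he]
        refine le_trans (LinearMap.rank_comp_le_right _ _) ?_
        have hle : LinearMap.range (P : H →ₗ[ℝ] H) ≤ V := by
          rintro z ⟨w, rfl⟩
          exact (V.orthogonalProjectionOnto w).2
        exact le_trans (Submodule.rank_mono hle) hVrank
      have h4 : LinearMap.rank (F : H →ₗ[ℝ] H) ≤ ((q + (q - 1) : ℕ) : Cardinal) := by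
        refine le_trans h1 (le_trans (add_le_add h2 h3) ?_)
        rw [Nat.cast_add]
      refine lt_of_le_of_lt h4 ?_
      have h5 : (q + (q - 1) : ℕ) < 2 * q := by omega
      exact_mod_cast Nat.cast_lt.mpr h5
    have hnorm : ‖S - F‖ ≤ c' := by
      refine ContinuousLinearMap.opNorm_le_bound _ hc'0 fun x => ?_
      have hdecomp : (S - F) x = T (x - P x) := by
        simp only [hF, hT, ContinuousLinearMap.sub_apply, ContinuousLinearMap.add_apply,
          ContinuousLinearMap.comp_apply, map_sub]
        abel
      have hmem : x - P x ∈ Vᗮ := by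
        have := Submodule.sub_starProjection_mem_orthogonal (K := V) x
        exact this
      have hb1 : ‖T (x - P x)‖ ≤ c' * ‖x - P x‖ := hVgood _ hmem
      have hb2 : ‖x - P x‖ ≤ ‖x‖ := by
        have hinner : ⟪(P x : H), x - P x⟫ = 0 := by
          rw [real_inner_comm]
          exact Submodule.starProjection_inner_eq_zero x (P x) (V.orthogonalProjectionOnto x).2
        have hsq : ‖x‖ ^ 2 = ‖(P x : H)‖ ^ 2 + ‖x - P x‖ ^ 2 := by
          have : x = P x + (x - P x) := by abel
          nth_rewrite 1 [this]
          rw [norm_add_sq_real, hinner]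
          ring
        nlinarith [norm_nonneg (x - P x), norm_nonneg x, norm_nonneg (P x : H)]
      calc ‖(S - F) x‖ = ‖T (x - P x)‖ := by rw [hdecomp]
        _ ≤ c' * ‖x - P x‖ := hb1
        _ ≤ c' * ‖x‖ := mul_le_mul_of_nonneg_left hb2 hc'0
    have hcle : c ≤ ‖S - F‖ := csInf_le hbdd ⟨F, hrankF, rfl⟩
    linarith
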